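/- For all integers N ≥ 2, M ≥ 3, and m' with 1 ≤ m' ≤ M - 2, one has (1 - N^{-m'})/(1 - N^{-(M-1)}) > ln(m'+1)/ln(M). -/

import Mathlib

/-- Lower bound: `1/(k+2) ≤ log((k+2)/(k+1))`. -/
lemma aux_logE (k : ℕ) : 1 / ((k:ℝ)+2) ≤ Real.log (((k:ℝ)+2)/((k:ℝ)+1)) := by
  have h1 : (0:ℝ) < (k:ℝ)+1 := by positivity
  have h2 : (0:ℝ) < (k:ℝ)+2 := by positivity
  have h := Real.log_le_sub_one_of_pos (show (0:ℝ) < ((k:ℝ)+1)/((k:ℝ)+2) by positivity)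
  rw [Real.log_div (by linarith) (by linarith)] at h
  rw [Real.log_div (by linarith) (by linarith)]
  have h3 : ((k:ℝ)+1)/((k:ℝ)+2) - 1 = -(1/((k:ℝ)+2)) := by field_simp; norm_num
  rw [h3] at h
  linarith

/-- `(k+2) log(k+1) < 2^k` for `k ≥ 3`. -/
lemma aux_lemD (k : ℕ) (hk : 3 ≤ k) : ((k:ℝ)+2) * Real.log ((k:ℝ)+1) < 2^k := by
  induction k, hk using Nat.le_induction with
  | base =>
      have h4 : Real.log (((3:ℕ):ℝ)+1) = 2 * Real.log 2 := by
        norm_num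
        rw [show (4:ℝ) = 2^2 by norm_num, Real.log_pow]
        norm_num
      rw [h4]
      push_cast
      nlinarith [Real.log_two_lt_d9]
  | succ k hk3 IH =>
      have hkpos : (0:ℝ) < (k:ℝ)+1 := by positivity
      have hk3' : (3:ℝ) ≤ (k:ℝ) := by exact_mod_cast hk3
      -- log(k+2) ≤ log(k+1) + 1/(k+1)
      have hle : Real.log ((k:ℝ)+2) ≤ Real.log ((k:ℝ)+1) + 1/((k:ℝ)+1) := by
        have h := Real.log_le_sub_one_of_pos
          (show (0:ℝ) < ((k:ℝ)+2)/((k:ℝ)+1) by positivity)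
        rw [Real.log_div (by linarith) (by linarith)] at h
        have h3 : ((k:ℝ)+2)/((k:ℝ)+1) - 1 = 1/((k:ℝ)+1) := by field_simp; norm_num
        rw [h3] at h
        linarith
      -- log(k+1) ≥ 2 log 2 > 1.38
      have hlog4 : Real.log 4 ≤ Real.log ((k:ℝ)+1) := by
        apply Real.log_le_log (by norm_num)
        linarith
      have hlog4e : Real.log 4 = 2 * Real.log 2 := by
        rw [show (4:ℝ) = 2^2 by norm_num, Real.log_pow]; norm_num
      have hlt : (1.38 : ℝ) < Real.log ((k:ℝ)+1) := by
        nlinarith [Real.log_two_gt_d9]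
      have e1 : ((k:ℝ)+3) * Real.log ((k:ℝ)+2)
          ≤ ((k:ℝ)+3) * Real.log ((k:ℝ)+1) + ((k:ℝ)+3) * (1/((k:ℝ)+1)) := by
        nlinarith [mul_le_mul_of_nonneg_left hle (show (0:ℝ) ≤ (k:ℝ)+3 by linarith)]
      have e3 : ((k:ℝ)+3) * (1/((k:ℝ)+1)) ≤ 2 := by
        rw [mul_one_div, div_le_iff₀ hkpos]; linarith
      have e2 : (2:ℝ) < ((k:ℝ)+1) * Real.log ((k:ℝ)+1) := by nlinarith
      have e4 : ((k:ℝ)+3) * Real.log ((k:ℝ)+1) + ((k:ℝ)+1) * Real.log ((k:ℝ)+1)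
          = 2 * (((k:ℝ)+2) * Real.log ((k:ℝ)+1)) := by ring
      have hp : (2:ℝ)^(k+1) = 2 * 2^k := by rw [pow_succ]; ring
      push_cast
      rw [hp]
      have : ((k:ℝ)+1+2) = (k:ℝ)+3 := by ring
      rw [this, show ((k:ℝ)+1+1) = (k:ℝ)+2 by ring]
      linarith

/-- Key: `log(k+1) < 2^k * log((k+2)/(k+1))` for `k ≥ 1`. -/
lemma aux_lemA (k : ℕ) (hk : 1 ≤ k) :
    Real.log ((k:ℝ)+1) < 2^k * Real.log (((k:ℝ)+2)/((k:ℝ)+1)) := by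
  rcases Nat.lt_or_ge k 3 with h | h
  · interval_cases k
    · -- k = 1 : log 2 < 2 * log (3/2)
      norm_num
      calc Real.log 2 < Real.log (9/4) := Real.log_lt_log (by norm_num) (by norm_num)
        _ = Real.log ((3/2:ℝ)^2) := by norm_num
        _ = 2 * Real.log (3/2) := by rw [Real.log_pow]; norm_num
    · -- k = 2 : log 3 < 4 * log (4/3)
      norm_num
      calc Real.log 3 < Real.log (256/81) := Real.log_lt_log (by norm_num) (by norm_num)
        _ = Real.log ((4/3:ℝ)^4) := by norm_num
        _ = 4 * Real.log (4/3) := by rw [Real.log_pow]; norm_num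
  · have hD := aux_lemD k h
    have hE := aux_logE k
    have h2k : (0:ℝ) < 2^k := by positivity
    have hkpos : (0:ℝ) < (k:ℝ)+2 := by positivity
    have h1 : Real.log ((k:ℝ)+1) < 2^k * (1/((k:ℝ)+2)) := by
      rw [mul_one_div, lt_div_iff₀ hkpos]; linarith
    calc Real.log ((k:ℝ)+1) < 2^k * (1/((k:ℝ)+2)) := h1
      _ ≤ 2^k * Real.log (((k:ℝ)+2)/((k:ℝ)+1)) :=
          mul_le_mul_of_nonneg_left hE h2k.le

/-- Per-step inequality. -/
lemma aux_lemB (x : ℝ) (hx0 : 0 < x) (hx2 : x ≤ 1/2) (k : ℕ) (hk : 1 ≤ k) :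
    (1 - x^(k+1)) * Real.log ((k:ℝ)+1) < (1 - x^k) * Real.log ((k:ℝ)+2) := by
  have hx1 : x < 1 := by linarith
  have hk1 : (1:ℝ) ≤ (k:ℝ) := by exact_mod_cast hk
  have hL1 : 0 ≤ Real.log ((k:ℝ)+1) := Real.log_nonneg (by linarith)
  have hxk : x^k ≤ (1/2:ℝ)^k := pow_le_pow_left₀ hx0.le hx2 k
  have h2k : ((1:ℝ)/2)^k = 1/2^k := by rw [div_pow, one_pow]
  have hA := aux_lemA k hk
  rw [Real.log_div (by linarith) (by linarith)] at hA
  have h2kpos : (0:ℝ) < 2^k := by positivity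
  have key : x^k * Real.log ((k:ℝ)+1)
      < Real.log ((k:ℝ)+2) - Real.log ((k:ℝ)+1) := by
    have h1 : x^k * Real.log ((k:ℝ)+1) ≤ (1/2^k) * Real.log ((k:ℝ)+1) := by
      apply mul_le_mul_of_nonneg_right _ hL1
      rw [← h2k]; exact hxk
    have h2 : (1/2^k) * Real.log ((k:ℝ)+1)
        < (1/2^k) * (2^k * (Real.log ((k:ℝ)+2) - Real.log ((k:ℝ)+1))) :=
      mul_lt_mul_of_pos_left hA (by positivity)
    have h3 : (1/2^k) * (2^k * (Real.log ((k:ℝ)+2) - Real.log ((k:ℝ)+1)))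
        = Real.log ((k:ℝ)+2) - Real.log ((k:ℝ)+1) := by
      field_simp
    linarith
  have hxk1 : x^k ≤ x := by
    calc x^k ≤ x^1 := pow_le_pow_of_le_one hx0.le hx1.le hk
      _ = x := pow_one x
  have hDel : 0 ≤ Real.log ((k:ℝ)+2) - Real.log ((k:ℝ)+1) := by
    have := mul_nonneg (pow_nonneg hx0.le k) hL1
    linarith
  have h5 : (1-x) * (x^k * Real.log ((k:ℝ)+1))
      < (1-x) * (Real.log ((k:ℝ)+2) - Real.log ((k:ℝ)+1)) :=
    mul_lt_mul_of_pos_left key (by linarith)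
  have h6 : (1-x) * (Real.log ((k:ℝ)+2) - Real.log ((k:ℝ)+1))
      ≤ (1-x^k) * (Real.log ((k:ℝ)+2) - Real.log ((k:ℝ)+1)) :=
    mul_le_mul_of_nonneg_right (by linarith) hDel
  have hps : x^(k+1) = x^k * x := pow_succ x k
  nlinarith [h5, h6]

/-- Ratio inequality. -/
lemma aux_lemC (x : ℝ) (hx0 : 0 < x) (hx2 : x ≤ 1/2) (a b : ℕ) (ha : 1 ≤ a)
    (hab : a < b) :
    Real.log ((a:ℝ)+1) / Real.log ((b:ℝ)+1) < (1 - x^a) / (1 - x^b) := by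
  have hx1 : x < 1 := by linarith
  have ha1 : (1:ℝ) ≤ (a:ℝ) := by exact_mod_cast ha
  induction b, hab using Nat.le_induction with
  | base =>
      have hB := aux_lemB x hx0 hx2 a ha
      have hlogpos : 0 < Real.log ((a:ℝ)+2) := Real.log_pos (by linarith)
      have hxpos : 0 < 1 - x^(a+1) := by
        have : x^(a+1) < 1 := pow_lt_one₀ hx0.le hx1 (by omega)
        linarith
      push_cast
      rw [show ((a:ℝ)+1+1) = (a:ℝ)+2 from by ring]
      rw [div_lt_div_iff₀ hlogpos hxpos]
      nlinarith [hB]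
  | succ b hb ih =>
      have hb1 : (1:ℝ) ≤ (b:ℝ) := by
        have : 1 ≤ b := by omega
        exact_mod_cast this
      have ihr := ih
      have hB := aux_lemB x hx0 hx2 b (by omega)
      have hlb1 : 0 < Real.log ((b:ℝ)+1) := Real.log_pos (by linarith)
      have hlb2 : 0 < Real.log ((b:ℝ)+2) := Real.log_pos (by linarith)
      have hxb : 0 < 1 - x^b := by
        have : x^b < 1 := pow_lt_one₀ hx0.le hx1 (by omega)
        linarith
      have hxb1 : 0 < 1 - x^(b+1) := by
        have : x^(b+1) < 1 := pow_lt_one₀ hx0.le hx1 (by omega)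
        linarith
      have hla : 0 ≤ Real.log ((a:ℝ)+1) := Real.log_nonneg (by linarith)
      have step : Real.log ((b:ℝ)+1) / Real.log ((b:ℝ)+2)
          < (1 - x^b) / (1 - x^(b+1)) := by
        rw [div_lt_div_iff₀ hlb2 hxb1]
        nlinarith [hB]
      have hmul := mul_lt_mul'' ihr step
        (div_nonneg hla hlb1.le) (div_nonneg hlb1.le hlb2.le)
      have e1 : Real.log ((a:ℝ)+1) / Real.log ((b:ℝ)+1)
            * (Real.log ((b:ℝ)+1) / Real.log ((b:ℝ)+2))
          = Real.log ((a:ℝ)+1) / Real.log ((b:ℝ)+2) := by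
        field_simp
      have e2 : (1 - x^a) / (1 - x^b) * ((1 - x^b) / (1 - x^(b+1)))
          = (1 - x^a) / (1 - x^(b+1)) := by
        field_simp
      rw [e1, e2] at hmul
      push_cast
      rw [show ((b:ℝ)+1+1) = (b:ℝ)+2 by ring]; exact hmul

theorem stmt_16 (N M m' : ℕ) (hN : 2 ≤ N) (hM : 3 ≤ M) (hm : 1 ≤ m')
    (hmM : m' ≤ M - 2) :
    (1 - 1 / (N : ℝ) ^ m') / (1 - 1 / (N : ℝ) ^ (M - 1)) >
      Real.log ((m' : ℝ) + 1) / Real.log M := by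
  have hN2 : (2:ℝ) ≤ (N:ℝ) := by exact_mod_cast hN
  set x : ℝ := ((N:ℝ))⁻¹ with hxdef
  have hx0 : 0 < x := by positivity
  have hx2 : x ≤ 1/2 := by
    rw [hxdef]
    rw [show (1:ℝ)/2 = (2:ℝ)⁻¹ by norm_num]
    exact inv_anti₀ (by norm_num) hN2
  have hab : m' < M - 1 := by omega
  have hC := aux_lemC x hx0 hx2 m' (M-1) hm hab
  have hM1 : ((M-1:ℕ):ℝ) + 1 = (M:ℝ) := by
    have h1 : (1:ℕ) ≤ M := by omega
    rw [Nat.cast_sub h1]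
    push_cast; ring
  rw [hM1] at hC
  have hpow : ∀ n : ℕ, 1 / (N:ℝ)^n = x^n := by
    intro n
    rw [hxdef, inv_pow, one_div]
  rw [hpow m', hpow (M-1)]
  exact hC
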